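/- Let X be a simplicial group, n ≥ 1, and let A be a nonempty proper subset of {0,…,n-1} with |A| = m (so 1 ≤ m ≤ n-1). Let π : X_{n-1} → X_{n-1-m} be the composite of face maps deleting exactly the indices in A, i.e. X applied to the monotone injection [n-1-m] → [n-1] in the simplex category whose image is the complement of A. Then π is surjective and Ker π = ∏_{i∈A} Ker d^{n-1}_i (the join of the kernels); consequently X_{n-1} / ∏_{i∈A} Ker d^{n-1}_i ≅ X_{n-1-m}. -/

import Mathlib

open CategoryTheory Simplicial

/-- A join of normal subgroups is normal. -/
instance iSup_normal' {F : Type*} [Group F] {ι : Sort*} (R : ι → Subgroup F)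
    [h : ∀ i, (R i).Normal] : (⨆ i, R i).Normal := by
  constructor
  intro x hx g
  have h1 : Subgroup.map (MulAut.conj g).toMonoidHom (⨆ i, R i) ≤ ⨆ i, R i := by
    rw [Subgroup.map_iSup]
    exact iSup_mono fun i => Subgroup.map_le_iff_le_comap.2 fun y hy =>
      Subgroup.mem_comap.2 (by simpa using (h i).conj_mem y hy g)
  exact h1 (Subgroup.mem_map.2 ⟨x, hx, by simp⟩)

lemma hom_congr {A B : GrpCat} {f g : A ⟶ B} (h : f = g) (x : A) : f x = g x := by rw [h]

lemma comp_app {A B C : GrpCat} (f : A ⟶ B) (g : B ⟶ C) (x : A) : (f ≫ g) x = g (f x) := rfl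

lemma sigma_ker_lt (X : SimplicialObject GrpCat) (n : ℕ) (k j : Fin (n+2)) (hjk : j.val < k.val)
    (z : X _⦋n+1⦌) (hz : X.δ j z = 1) :
    X.δ (Fin.castSucc j) (X.σ k z) = 1 := by
  set k' : Fin (n+1) := ⟨k.val - 1, by omega⟩ with hk'
  have hks : k'.succ = k := by ext; simp [hk']; omega
  have hle : j ≤ Fin.castSucc k' := by
    rw [Fin.le_iff_val_le_val]; simp [hk']; omega
  have h := X.δ_comp_σ_of_le (i := j) (j := k') hle
  rw [hks] at h
  have h2 := hom_congr h z
  rw [comp_app, comp_app] at h2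
  rw [h2, hz]
  exact MonoidHom.map_one _

lemma sigma_ker_gt (X : SimplicialObject GrpCat) (n : ℕ) (k j : Fin (n+2)) (hjk : k.val < j.val)
    (z : X _⦋n+1⦌) (hz : X.δ j z = 1) :
    X.δ j.succ (X.σ k z) = 1 := by
  set k' : Fin (n+1) := ⟨k.val, by omega⟩ with hk'
  have hks : Fin.castSucc k' = k := by ext; simp [hk']
  have hlt : Fin.castSucc k' < j := by
    rw [Fin.lt_iff_val_lt_val]; simpa [hk'] using hjk
  have h := X.δ_comp_σ_of_gt (i := j) (j := k') hlt
  rw [hks] at h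
  have h2 := hom_congr h z
  rw [comp_app, comp_app] at h2
  rw [h2, hz]
  exact MonoidHom.map_one _

lemma sigma_ker_eq (X : SimplicialObject GrpCat) (n : ℕ) (j : Fin (n+2))
    (z : X _⦋n+1⦌) (hz : X.δ j z = 1) :
    X.σ j z ∈ MonoidHom.ker (X.δ (Fin.castSucc j)).hom ⊔ MonoidHom.ker (X.δ j.succ).hom := by
  have hself : X.δ (Fin.castSucc j) (X.σ j z) = z := by
    have h := X.δ_comp_σ_self (i := j)
    have h2 := hom_congr h z
    rwa [comp_app] at h2
  induction j using Fin.cases with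
  | zero =>
    set v := X.σ 1 z with hv
    have hv_ker : X.δ (Fin.castSucc (0 : Fin (n+2))) v = 1 := by
      have h := X.δ_comp_σ_of_le (i := (0 : Fin (n+2))) (j := (0 : Fin (n+1))) (by simp)
      have h1 : (0 : Fin (n+1)).succ = (1 : Fin (n+2)) := rfl
      rw [h1] at h
      have h2 := hom_congr h z
      rw [comp_app, comp_app] at h2
      rw [hv, h2, hz]
      exact MonoidHom.map_one _
    have hdv : X.δ (0 : Fin (n+2)).succ v = z := by
      have h := X.δ_comp_σ_self' (i := (1 : Fin (n+2)))
        (j := ((0 : Fin (n+2)).succ : Fin (n+3))) (by ext; simp)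
      have h2 := hom_congr h z
      rw [comp_app] at h2
      rw [hv, h2]; rfl
    have hd1 : X.δ (0 : Fin (n+2)).succ (X.σ 0 z) = z := by
      have h := X.δ_comp_σ_succ (i := (0 : Fin (n+2)))
      have h2 := hom_congr h z
      rwa [comp_app] at h2
    have hsplit : X.σ 0 z = (X.σ 0 z * v⁻¹) * v := by group
    rw [hsplit]
    refine mul_mem (Subgroup.mem_sup_right ?_) (Subgroup.mem_sup_left ?_)
    · rw [MonoidHom.mem_ker, MonoidHom.map_mul, MonoidHom.map_inv, hd1, hdv]
      group
    · rwa [MonoidHom.mem_ker]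
  | succ j' =>
    set v := X.σ (Fin.castSucc j') z with hv
    have hv_ker : X.δ (j'.succ).succ v = 1 := by
      have h := X.δ_comp_σ_of_gt (i := j'.succ) (j := j') (Fin.castSucc_lt_succ (i := j'))
      have h2 := hom_congr h z
      rw [comp_app, comp_app] at h2
      rw [hv, h2, hz]
      exact MonoidHom.map_one _
    have hdv : X.δ (Fin.castSucc j'.succ) v = z := by
      have h := X.δ_comp_σ_succ' (i := Fin.castSucc j') (j := Fin.castSucc j'.succ)
        (by rw [Fin.succ_castSucc])
      have h2 := hom_congr h z
      rw [comp_app] at h2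
      rw [hv, h2]; rfl
    have hsplit : X.σ j'.succ z = (X.σ j'.succ z * v⁻¹) * v := by group
    rw [hsplit]
    refine mul_mem (Subgroup.mem_sup_left ?_) (Subgroup.mem_sup_right ?_)
    · rw [MonoidHom.mem_ker, MonoidHom.map_mul, MonoidHom.map_inv, hself, hdv]
      group
    · rwa [MonoidHom.mem_ker]

lemma delta_surj (X : SimplicialObject GrpCat) {n} (i : Fin (n+2)) :
    Function.Surjective (X.δ i) := by
  induction i using Fin.cases with
  | zero =>
    intro y
    refine ⟨X.σ 0 y, ?_⟩
    have h := X.δ_comp_σ_self' (i := (0 : Fin (n+1))) (j := (0 : Fin (n+2))) (by simp)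
    simpa [comp_app] using hom_congr h y
  | succ j =>
    intro y
    exact ⟨X.σ j y, by simpa [comp_app] using hom_congr (X.δ_comp_σ_succ (i := j)) y⟩

lemma map_surj (X : SimplicialObject GrpCat) : ∀ (n q : ℕ) (θ : (⦋q⦌ : SimplexCategory) ⟶ ⦋n⦌),
    Function.Injective θ.toOrderHom → Function.Surjective (X.map θ.op) := by
  intro n
  induction n with
  | zero =>
    intro q θ hinj
    have hq : q = 0 := by
      have := Fintype.card_le_of_injective _ hinj
      simpa [SimplexCategory.len_mk] using this
    subst hq
    have : θ = 𝟙 _ := by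
      have : Mono θ := SimplexCategory.mono_iff_injective.mpr hinj
      exact SimplexCategory.eq_id_of_mono θ
    rw [this]
    simp only [op_id, X.map_id]
    exact fun y => ⟨y, rfl⟩
  | succ n ih =>
    intro q θ hinj
    by_cases hq : q = n + 1
    · subst hq
      have : Mono θ := SimplexCategory.mono_iff_injective.mpr hinj
      rw [SimplexCategory.eq_id_of_mono θ]
      simp only [op_id, X.map_id]
      exact fun y => ⟨y, rfl⟩
    · have hqle : q + 1 ≤ n + 1 := by
        have := Fintype.card_le_of_injective _ hinj
        simp only [Fintype.card_fin, SimplexCategory.len_mk] at this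
        omega
      have hns : ¬ Function.Surjective θ.toOrderHom := by
        intro hs
        have := Fintype.card_le_of_surjective _ hs
        simp only [Fintype.card_fin, SimplexCategory.len_mk] at this
        omega
      obtain ⟨i, θ', hfac⟩ := SimplexCategory.eq_comp_δ_of_not_surjective θ hns
      have hinj' : Function.Injective θ'.toOrderHom := by
        intro a b hab
        apply hinj
        have h1 : θ.toOrderHom a = (SimplexCategory.δ i).toOrderHom (θ'.toOrderHom a) := by
          rw [hfac]; rfl
        rw [h1, hab, hfac]; rfl
      have hmc : X.map θ.op = X.map (SimplexCategory.δ i).op ≫ X.map θ'.op := by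
        rw [← X.map_comp, ← op_comp, ← hfac]
      rw [hmc]
      intro y
      obtain ⟨z, hz⟩ := ih q θ' hinj' y
      obtain ⟨w, hw⟩ := delta_surj X i z
      exact ⟨w, by rw [comp_app]; show X.map θ'.op (X.δ i w) = y; rw [hw, hz]⟩

lemma theta_eq_delta (p : ℕ) (i : Fin (p+2)) (θ : (⦋p⦌ : SimplexCategory) ⟶ ⦋p+1⦌)
    (hinj : Function.Injective θ.toOrderHom)
    (him : Set.range θ.toOrderHom = ({i} : Set (Fin (p+2)))ᶜ) :
    θ = SimplexCategory.δ i := by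
  have h1 : StrictMono (θ.toOrderHom : Fin (p+1) → Fin (p+2)) :=
    θ.toOrderHom.monotone.strictMono_of_injective hinj
  have h2 : StrictMono ((SimplexCategory.δ i).toOrderHom : Fin (p+1) → Fin (p+2)) :=
    (SimplexCategory.δ i).toOrderHom.monotone.strictMono_of_injective
      (SimplexCategory.mono_iff_injective.mp inferInstance)
  have hrange : Set.range ((SimplexCategory.δ i).toOrderHom : Fin (p+1) → Fin (p+2)) =
      ({i} : Set (Fin (p+2)))ᶜ := by
    show Set.range i.succAbove = _
    exact Fin.range_succAbove i
  haveI hw : WellFoundedLT (Fin (p+1)) := inferInstance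
  have heq : (θ.toOrderHom : Fin (p+1) → Fin (p+2)) =
      ((SimplexCategory.δ i).toOrderHom : Fin (p+1) → Fin (p+2)) :=
    (@StrictMono.range_inj (Fin (p+1)) (Fin (p+2)) inferInstance inferInstance hw _ _ h1 h2).mp
      (him.trans hrange.symm)
  exact SimplexCategory.Hom.ext _ _ (OrderHom.ext _ _ heq)

lemma ker_main (X : SimplicialObject GrpCat) : ∀ (m p q : ℕ) (A : Finset (Fin (p+2))),
    A.card = m + 1 → q + (m+1) = p + 1 →
    ∀ (θ : (⦋q⦌ : SimplexCategory) ⟶ ⦋p+1⦌), Function.Injective θ.toOrderHom →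
    Set.range θ.toOrderHom = (↑(Aᶜ) : Set (Fin (p+2))) →
    MonoidHom.ker (X.map θ.op).hom = ⨆ i ∈ A, MonoidHom.ker (X.δ i).hom := by
  intro m
  induction m with
  | zero =>
    intro p q A hA hq θ hinj him
    obtain ⟨i, rfl⟩ := Finset.card_eq_one.mp hA
    obtain rfl : p = q := by omega
    have him' : Set.range θ.toOrderHom = ({i} : Set (Fin (p+2)))ᶜ := by
      rw [him]; simp
    have hθ : θ = SimplexCategory.δ i := theta_eq_delta p i θ hinj him'
    subst hθ
    have : X.map (SimplexCategory.δ i).op = X.δ i := rfl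
    rw [this]
    simp
  | succ m ih =>
    intro p q A hA hq θ hinj him
    obtain ⟨p', rfl⟩ : ∃ p', p = p' + 1 := ⟨q + m, by omega⟩
    have hAne : A.Nonempty := Finset.card_pos.mp (by omega)
    set i := A.min' hAne with hidef
    have hiA : i ∈ A := A.min'_mem hAne
    -- i is not the last element
    have hival : i.val ≤ p' + 1 := by
      obtain ⟨b, hb, hbi⟩ := Finset.exists_mem_ne (by omega : 1 < A.card) i
      have h1 := A.min'_le b hb
      have hlt : i < b := lt_of_le_of_ne h1 (Ne.symm hbi)
      have := b.isLt
      rw [Fin.lt_iff_val_lt_val] at hlt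
      omega
    set k : Fin (p'+2) := ⟨i.val, by omega⟩ with hkdef
    have hik : i = Fin.castSucc k := by ext; simp [hkdef]
    -- factor θ through δ i
    have hnotin : ∀ t : Fin (q+1), θ.toOrderHom t ≠ i := by
      intro t ht
      have : i ∈ Set.range θ.toOrderHom := ⟨t, ht⟩
      rw [him] at this
      simp only [Finset.coe_compl, Set.mem_compl_iff, Finset.mem_coe] at this
      exact this hiA
    set θ' := SimplexCategory.factor_δ θ i with hθ'def
    have hfac : θ' ≫ SimplexCategory.δ i = θ := SimplexCategory.factor_δ_spec θ i hnotin
    have hcomp : ∀ t, θ.toOrderHom t = i.succAbove (θ'.toOrderHom t) := by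
      intro t
      rw [← hfac]; rfl
    have hinj' : Function.Injective θ'.toOrderHom := by
      intro a b hab
      exact hinj (show θ.toOrderHom a = θ.toOrderHom b by rw [hcomp a, hcomp b, hab])
    set A' : Finset (Fin (p'+2)) := Finset.univ.filter (fun j => i.succAbove j ∈ A) with hA'def
    have hmemA' : ∀ j : Fin (p'+2), j ∈ A' ↔ i.succAbove j ∈ A := by
      intro j; simp [hA'def]
    have himg : A.erase i = A'.image i.succAbove := by
      ext j
      simp only [Finset.mem_erase, Finset.mem_image]
      constructor
      · rintro ⟨hne, hjA⟩
        obtain ⟨j', hj'⟩ := Fin.exists_succAbove_eq hne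
        exact ⟨j', (hmemA' j').mpr (hj' ▸ hjA), hj'⟩
      · rintro ⟨j', hj', rfl⟩
        exact ⟨Fin.succAbove_ne i j', (hmemA' j').mp hj'⟩
    have hA' : A'.card = m + 1 := by
      have h1 : (A.erase i).card = m + 1 := by
        rw [Finset.card_erase_of_mem hiA, hA]
        omega
      rw [himg, Finset.card_image_of_injective _ (Fin.succAbove_right_injective)] at h1
      exact h1
    have hq' : q + (m + 1) = p' + 1 := by omega
    have him' : Set.range θ'.toOrderHom = (↑(A'ᶜ) : Set (Fin (p'+2))) := by
      ext j'
      simp only [Set.mem_range, Finset.coe_compl, Set.mem_compl_iff, Finset.mem_coe]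
      rw [hmemA']
      constructor
      · rintro ⟨t, rfl⟩
        intro hmem
        have h1 : θ.toOrderHom t ∈ Set.range θ.toOrderHom := ⟨t, rfl⟩
        rw [him] at h1
        simp only [Finset.coe_compl, Set.mem_compl_iff, Finset.mem_coe] at h1
        exact h1 (by rw [hcomp t]; exact hmem)
      · intro hnot
        have h1 : i.succAbove j' ∈ Set.range θ.toOrderHom := by
          rw [him]
          simpa using hnot
        obtain ⟨t, ht⟩ := h1
        refine ⟨t, Fin.succAbove_right_injective (p := i) ?_⟩
        rw [← hcomp t, ht]
    have IH := ih p' q A' hA' hq' θ' hinj' him'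
    -- the two inclusions
    apply le_antisymm
    · -- ker ≤ ⨆
      intro x hx
      rw [MonoidHom.mem_ker] at hx
      have hu : X.map θ'.op (X.δ i x) = 1 := by
        have h1 : X.map θ.op x = X.map θ'.op (X.δ i x) := by
          conv_lhs => rw [← hfac]
          rw [op_comp, X.map_comp, comp_app]
          rfl
        rw [← h1, hx]
      have humem : X.δ i x ∈ ⨆ j' ∈ A', MonoidHom.ker (X.δ j').hom := by
        rw [← IH]; exact hu
      -- σ k maps the join at level p' into the join at level p'+1
      have hclaim : ∀ j' : Fin (p'+2), j' ∈ A' →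
          Subgroup.map (X.σ k).hom (MonoidHom.ker (X.δ j').hom) ≤
            ⨆ j ∈ A, MonoidHom.ker (X.δ j).hom := by
        intro j' hj'
        rintro w ⟨z, hz, rfl⟩
        rw [SetLike.mem_coe, MonoidHom.mem_ker] at hz
        have hjA : i.succAbove j' ∈ A := (hmemA' j').mp hj'
        rcases lt_trichotomy j'.val k.val with h | h | h
        · have hab : i.succAbove j' = Fin.castSucc j' := by
            apply Fin.succAbove_of_castSucc_lt
            rw [Fin.lt_iff_val_lt_val, hik]
            simpa using h
          have h1 := sigma_ker_lt X p' k j' h z hz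
          refine Subgroup.mem_iSup_of_mem (Fin.castSucc j') ?_
          refine Subgroup.mem_iSup_of_mem (hab ▸ hjA) ?_
          exact h1
        · have hj'k : j' = k := Fin.ext h
          subst hj'k
          have hab : i.succAbove k = k.succ := by
            apply Fin.succAbove_of_le_castSucc
            rw [hik]
          have h1 := sigma_ker_eq X p' k z hz
          have hle : MonoidHom.ker (X.δ (Fin.castSucc k)).hom ⊔ MonoidHom.ker (X.δ k.succ).hom ≤
              ⨆ j ∈ A, MonoidHom.ker (X.δ j).hom := by
            apply sup_le
            · refine le_trans ?_ (le_iSup₂ (Fin.castSucc k) (hik ▸ hiA))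
              exact le_rfl
            · refine le_trans ?_ (le_iSup₂ k.succ (hab ▸ hjA))
              exact le_rfl
          exact hle h1
        · have hab : i.succAbove j' = j'.succ := by
            apply Fin.succAbove_of_le_castSucc
            rw [hik, Fin.le_iff_val_le_val]
            simpa using le_of_lt h
          have h1 := sigma_ker_gt X p' k j' h z hz
          refine Subgroup.mem_iSup_of_mem j'.succ ?_
          refine Subgroup.mem_iSup_of_mem (hab ▸ hjA) ?_
          exact h1
      have hsu : X.σ k (X.δ i x) ∈ ⨆ j ∈ A, MonoidHom.ker (X.δ j).hom := by
        have hmap : Subgroup.map (X.σ k).hom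
            (⨆ j' ∈ A', MonoidHom.ker (X.δ j').hom) ≤ ⨆ j ∈ A, MonoidHom.ker (X.δ j).hom := by
          simp_rw [Subgroup.map_iSup]
          exact iSup₂_le hclaim
        exact hmap (Subgroup.mem_map_of_mem _ humem)
      have hdsu : X.δ i (X.σ k (X.δ i x)) = X.δ i x := by
        have h := X.δ_comp_σ_self' (i := k) (j := i) hik
        have h2 := hom_congr h (X.δ i x)
        rwa [comp_app] at h2
      have hfirst : x * (X.σ k (X.δ i x))⁻¹ ∈ ⨆ j ∈ A, MonoidHom.ker (X.δ j).hom := by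
        refine Subgroup.mem_iSup_of_mem i (Subgroup.mem_iSup_of_mem hiA ?_)
        rw [MonoidHom.mem_ker, MonoidHom.map_mul, MonoidHom.map_inv, hdsu]
        group
      have hx2 : x = (x * (X.σ k (X.δ i x))⁻¹) * (X.σ k (X.δ i x)) := by group
      rw [hx2]
      exact mul_mem hfirst hsu
    · -- ⨆ ≤ ker
      refine iSup₂_le fun j hj => ?_
      have hnotinj : ∀ t : Fin (q+1), θ.toOrderHom t ≠ j := by
        intro t ht
        have : j ∈ Set.range θ.toOrderHom := ⟨t, ht⟩
        rw [him] at this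
        simp only [Finset.coe_compl, Set.mem_compl_iff, Finset.mem_coe] at this
        exact this hj
      have hfacj := SimplexCategory.factor_δ_spec θ j hnotinj
      intro x hx
      rw [MonoidHom.mem_ker] at hx ⊢
      calc X.map θ.op x
          = X.map (SimplexCategory.factor_δ θ j).op (X.δ j x) := by
            conv_lhs => rw [← hfacj]
            rw [op_comp, X.map_comp, comp_app]
            rfl
        _ = 1 := by rw [hx]; exact MonoidHom.map_one _

theorem kernel_of_composite_face_map (X : SimplicialObject GrpCat) (p : ℕ)
    (A : Finset (Fin (p + 2))) (hne : A.Nonempty) (hproper : A ≠ Finset.univ)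
    (q : ℕ) (hq : q + A.card = p + 1)
    (θ : (⦋q⦌ : SimplexCategory) ⟶ ⦋p + 1⦌)
    (hinj : Function.Injective θ.toOrderHom)
    (him : Set.range θ.toOrderHom = (↑(Aᶜ) : Set (Fin (p + 2)))) :
    Function.Surjective (X.map θ.op) ∧
    MonoidHom.ker (X.map θ.op).hom = ⨆ i ∈ A, MonoidHom.ker (X.δ i).hom ∧
    Nonempty (((X _⦋p+1⦌ : Type _) ⧸ ⨆ i ∈ A, MonoidHom.ker (X.δ i).hom) ≃*
      (X _⦋q⦌ : Type _)) := by
  have hsurj : Function.Surjective (X.map θ.op) := map_surj X (p+1) q θ hinj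
  obtain ⟨m, hm⟩ : ∃ m, A.card = m + 1 :=
    ⟨A.card - 1, by have := Finset.card_pos.mpr hne; omega⟩
  have hker : MonoidHom.ker (X.map θ.op).hom = ⨆ i ∈ A, MonoidHom.ker (X.δ i).hom :=
    ker_main X m p q A hm (by omega) θ hinj him
  refine ⟨hsurj, hker, ⟨?_⟩⟩
  exact (QuotientGroup.quotientMulEquivOfEq hker.symm).trans
    (QuotientGroup.quotientKerEquivOfSurjective (X.map θ.op).hom hsurj)
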